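/- Let n ≥ 5 be an integer and let s₀ be the smallest root of the quadratic 4(n-1)s² - (2n² + 8n - 8)s + n² = 0. Then 0 < s₀ < 1, and for every s with s₀ < s < 1 there exists σ ∈ ℝ with -4s/(n-2s) < σ < 0 and s - (3n-4)/(2(n-1)) < σ < s - n/(2(n-1)). -/

import Mathlib

theorem stmt_8 (n : ℕ) (s₀ : ℝ) (hn : 5 ≤ n)
    (hroot : 4 * (n - 1) * s₀ ^ 2 - (2 * n ^ 2 + 8 * n - 8) * s₀ + n ^ 2 = 0)
    (hmin : ∀ s : ℝ, 4 * (n - 1) * s ^ 2 - (2 * n ^ 2 + 8 * n - 8) * s + n ^ 2 = 0 → s₀ ≤ s) :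
    0 < s₀ ∧ s₀ < 1 ∧
    ∀ s : ℝ, s₀ < s → s < 1 →
      ∃ σ : ℝ, -4 * s / (n - 2 * s) < σ ∧ σ < 0 ∧
        s - (3 * n - 4) / (2 * (n - 1)) < σ ∧ σ < s - n / (2 * (n - 1)) := by
  have hN : (5:ℝ) ≤ (n:ℝ) := by exact_mod_cast hn
  -- s₀ > 0
  have hs0pos : 0 < s₀ := by
    by_contra h
    push_neg at h
    nlinarith [sq_nonneg s₀, mul_nonneg (show (0:ℝ) ≤ 2*(n:ℝ)^2+8*(n:ℝ)-8 by nlinarith)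
      (neg_nonneg.mpr h)]
  -- s₀ < 1 via IVT
  have hs0lt1 : s₀ < 1 := by
    have hcont : ContinuousOn (fun s : ℝ => 4 * ((n:ℝ) - 1) * s ^ 2 - (2 * (n:ℝ) ^ 2 + 8 * (n:ℝ) - 8) * s + (n:ℝ) ^ 2) (Set.Icc 0 1) := by
      fun_prop
    have hsub := intermediate_value_Icc' (by norm_num : (0:ℝ) ≤ 1) hcont
    have hmem : (0:ℝ) ∈ Set.Icc (4 * ((n:ℝ) - 1) * 1 ^ 2 - (2 * (n:ℝ) ^ 2 + 8 * (n:ℝ) - 8) * 1 + (n:ℝ) ^ 2)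
        (4 * ((n:ℝ) - 1) * 0 ^ 2 - (2 * (n:ℝ) ^ 2 + 8 * (n:ℝ) - 8) * 0 + (n:ℝ) ^ 2) := by
      constructor <;> nlinarith
    obtain ⟨x, hx, hfx⟩ := hsub hmem
    have hx1 : x < 1 := by
      rcases lt_or_eq_of_le hx.2 with h | h
      · exact h
      · exfalso
        rw [h] at hfx
        simp only at hfx
        nlinarith
    exact lt_of_le_of_lt (hmin x hfx) hx1
  refine ⟨hs0pos, hs0lt1, ?_⟩
  intro s hs1 hs2
  have hspos : 0 < s := lt_trans hs0pos hs1
  have hd1 : 0 < (n:ℝ) - 2 * s := by nlinarith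
  have hd2 : 0 < 2 * ((n:ℝ) - 1) := by nlinarith
  -- q(s) < 0
  have hfac : 4 * ((n:ℝ) - 1) * (s + s₀) - (2 * (n:ℝ) ^ 2 + 8 * (n:ℝ) - 8) < 0 := by
    nlinarith [mul_pos (show (0:ℝ) < (n:ℝ) - 1 by nlinarith) (show (0:ℝ) < 1 - s by linarith),
      mul_pos (show (0:ℝ) < (n:ℝ) - 1 by nlinarith) (show (0:ℝ) < 1 - s₀ by linarith),
      sq_nonneg (n:ℝ)]
  have hq : 4 * ((n:ℝ) - 1) * s ^ 2 - (2 * (n:ℝ) ^ 2 + 8 * (n:ℝ) - 8) * s + (n:ℝ) ^ 2 < 0 := by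
    have hid : 4 * ((n:ℝ) - 1) * s ^ 2 - (2 * (n:ℝ) ^ 2 + 8 * (n:ℝ) - 8) * s + (n:ℝ) ^ 2
        = (s - s₀) * (4 * ((n:ℝ) - 1) * (s + s₀) - (2 * (n:ℝ) ^ 2 + 8 * (n:ℝ) - 8)) := by
      linear_combination hroot
    rw [hid]
    exact mul_neg_of_pos_of_neg (by linarith) hfac
  set L1 : ℝ := -4 * s / ((n:ℝ) - 2 * s) with hL1
  set L2 : ℝ := s - (3 * (n:ℝ) - 4) / (2 * ((n:ℝ) - 1)) with hL2
  set U2 : ℝ := s - (n:ℝ) / (2 * ((n:ℝ) - 1)) with hU2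
  have hL1neg : L1 < 0 := div_neg_of_neg_of_pos (by linarith) hd1
  have hL2neg : L2 < 0 := by
    rw [hL2, sub_neg]
    calc s < 1 := hs2
    _ ≤ (3 * (n:ℝ) - 4) / (2 * ((n:ℝ) - 1)) := by
          rw [le_div_iff₀ hd2]; nlinarith
  have hL1U2 : L1 < U2 := by
    have key : U2 - L1 = -(4 * ((n:ℝ) - 1) * s ^ 2 - (2 * (n:ℝ) ^ 2 + 8 * (n:ℝ) - 8) * s + (n:ℝ) ^ 2) / (((n:ℝ) - 2 * s) * (2 * ((n:ℝ) - 1))) := by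
      rw [hL1, hU2]
      rw [eq_div_iff (mul_ne_zero hd1.ne' hd2.ne')]
      have e1 : -4 * s / ((n:ℝ) - 2 * s) * ((n:ℝ) - 2 * s) = -4 * s := div_mul_cancel₀ _ hd1.ne'
      have e2 : (n:ℝ) / (2 * ((n:ℝ) - 1)) * (2 * ((n:ℝ) - 1)) = n := div_mul_cancel₀ _ hd2.ne'
      linear_combination (-((n:ℝ) - 2 * s)) * e2 + (-(2 * ((n:ℝ) - 1))) * e1
    have : 0 < U2 - L1 := by
      rw [key]
      exact div_pos (by linarith) (mul_pos hd1 hd2)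
    linarith
  have hL2U2 : L2 < U2 := by
    rw [hL2, hU2]
    have : (n:ℝ) / (2 * ((n:ℝ) - 1)) < (3 * (n:ℝ) - 4) / (2 * ((n:ℝ) - 1)) := by
      rw [div_lt_div_iff₀ hd2 hd2]; nlinarith
    linarith
  clear_value L1 L2 U2
  have h1 : max L1 L2 < min 0 U2 := by
    rcases max_cases L1 L2 with ⟨h, _⟩ | ⟨h, _⟩ <;> rw [h] <;>
      exact lt_min (by linarith) (by linarith)
  refine ⟨(max L1 L2 + min 0 U2) / 2, ?_, ?_, ?_, ?_⟩
  · linarith [le_max_left L1 L2]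
  · linarith [min_le_left (0:ℝ) U2]
  · linarith [le_max_right L1 L2]
  · linarith [min_le_right (0:ℝ) U2]
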